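/- Conservation of the second invariant (Hamiltonian): let γ1 > 0, δ1 > 0, γ2, δ2 be real constants and γ = 7/48, and let η : ℝ × [0,T] → ℝ be a smooth solution of the fifth-order KdV–BBM equation such that x ↦ η(x,t) is a Schwartz function for each t and t ↦ η(·,t) is smooth into the Schwartz space. Then the functional Θ(η(·,t)) := (1/2) ∫_ℝ ( −η² − (1/2)η³ + (1/16)η⁴ + (7/24) η η_x² + γ2 η_x² − δ2 η_{xx}² ) dx is independent of t ∈ [0,T]. -/

import Mathlib

/-!
STATEMENT 12 (conservation of the second invariant / Hamiltonian, (invariant2)):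
if `γ = 7/48` and `η` is a smooth solution on `ℝ × [0,T]` of the fifth-order
KdV–BBM equation, Schwartz in `x` for each `t` and smooth in `t` into the
Schwartz space, then
`Θ(η(·,t)) := (1/2)∫(−η² − (1/2)η³ + (1/16)η⁴ + (7/24)η η_x² + γ2 η_x² − δ2 η_{xx}²)dx`
is independent of `t ∈ [0,T]`.

The solution is formalized as a curve `η : ℝ → 𝓢(ℝ,ℝ)` of Schwartz functions;
smoothness in time into the Schwartz space is encoded by a sequence `D n` of
time-derivative curves, `D 0 = η`, `D (n+1) t` being the derivative (within
`[0,T]`) of `D n` at `t` in the topology of `𝓢(ℝ,ℝ)`.  So `D 1 t = η_t(·,t)`.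
-/

noncomputable section
open MeasureTheory Real Set Filter Topology

namespace KdVAux

local notation "dd" => SchwartzMap.derivCLM ℝ ℝ

def SN (f : SchwartzMap ℝ ℝ) : ℝ :=
  SchwartzMap.seminorm ℝ 0 0 f + SchwartzMap.seminorm ℝ 2 0 f
def Q (f : SchwartzMap ℝ ℝ) : ℝ := SchwartzMap.seminorm ℝ 0 0 f
lemma Q_nonneg (f : SchwartzMap ℝ ℝ) : 0 ≤ Q f := apply_nonneg _ _
lemma abs_le_Q (f : SchwartzMap ℝ ℝ) (x : ℝ) : |f x| ≤ Q f := by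
  unfold Q
  simpa [Real.norm_eq_abs] using SchwartzMap.norm_le_seminorm ℝ f x
lemma SN_nonneg (f : SchwartzMap ℝ ℝ) : 0 ≤ SN f :=
  add_nonneg (apply_nonneg _ _) (apply_nonneg _ _)
lemma sdecay (f : SchwartzMap ℝ ℝ) (x : ℝ) : |f x| ≤ SN f * (1 + x ^ 2)⁻¹ := by
  have h0 := SchwartzMap.norm_le_seminorm ℝ f x
  have h2 := SchwartzMap.norm_pow_mul_le_seminorm ℝ f 2 x
  have hx : (0:ℝ) < 1 + x ^ 2 := by positivity
  rw [← div_eq_mul_inv, le_div_iff₀ hx]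
  simp only [Real.norm_eq_abs] at h0 h2
  have hsq : |x| ^ 2 = x ^ 2 := sq_abs x
  unfold SN
  nlinarith [abs_nonneg (f x)]

/-- integrable × bounded-continuous is integrable -/
lemma integrable_mul_bdd {g : ℝ → ℝ} (f : SchwartzMap ℝ ℝ) (hg : Continuous g) {C : ℝ}
    (hC : ∀ x, |g x| ≤ C) : Integrable (fun x => f x * g x) := by
  refine ((f.integrable (μ := volume)).norm.const_mul C).mono'
    (f.continuous.aestronglyMeasurable.mul hg.aestronglyMeasurable) ?_
  filter_upwards with x
  simp only [Real.norm_eq_abs, norm_norm]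
  calc |f x * g x| = |f x| * |g x| := abs_mul _ _
    _ ≤ |f x| * C := mul_le_mul_of_nonneg_left (hC x) (abs_nonneg _)
    _ = C * |f x| := mul_comm _ _

lemma integrable_mul2 (f g : SchwartzMap ℝ ℝ) :
    Integrable (fun x => f x * g x) :=
  integrable_mul_bdd f g.continuous (abs_le_Q g)

lemma integrable_mul3 (f g h : SchwartzMap ℝ ℝ) :
    Integrable (fun x => f x * g x * h x) := by
  have := integrable_mul_bdd f (g := fun x => g x * h x) ((g.continuous).mul (h.continuous))
    (C := Q g * Q h) (fun x => by
      calc |g x * h x| = |g x| * |h x| := abs_mul _ _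
        _ ≤ Q g * Q h := mul_le_mul (abs_le_Q g x) (abs_le_Q h x) (abs_nonneg _) (Q_nonneg g))
  simpa only [mul_assoc] using this

lemma integrable_mul4 (f g h k : SchwartzMap ℝ ℝ) :
    Integrable (fun x => f x * g x * h x * k x) := by
  have := integrable_mul_bdd f (g := fun x => g x * (h x * k x)) ((g.continuous).mul ((h.continuous).mul (k.continuous)))
    (C := Q g * (Q h * Q k)) (fun x => by
      have : |g x * (h x * k x)| = |g x| * (|h x| * |k x|) := by
        rw [abs_mul, abs_mul]
      rw [this]
      refine mul_le_mul (abs_le_Q g x) ?_ (by positivity) (Q_nonneg g)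
      exact mul_le_mul (abs_le_Q h x) (abs_le_Q k x) (abs_nonneg _) (Q_nonneg h))
  simpa only [mul_assoc] using this

/-- basic integral bound -/
lemma abs_integral_mul_bdd {g : ℝ → ℝ} (f : SchwartzMap ℝ ℝ) (hg : Continuous g) {C : ℝ}
    (hC : ∀ x, |g x| ≤ C) : |∫ x, f x * g x| ≤ π * (SN f * C) := by
  have hC0 : 0 ≤ C := (abs_nonneg (g 0)).trans (hC 0)
  have hint : Integrable (fun x => f x * g x) := integrable_mul_bdd f hg hC
  calc |∫ x, f x * g x| ≤ ∫ x, |f x * g x| := by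
        have := norm_integral_le_integral_norm (μ := volume) (fun x => f x * g x)
        simpa only [Real.norm_eq_abs] using this
    _ ≤ ∫ x, SN f * C * (1 + x ^ 2)⁻¹ := by
        refine integral_mono hint.abs ((integrable_inv_one_add_sq).const_mul _) (fun x => ?_)
        have h1 : |f x * g x| = |f x| * |g x| := abs_mul _ _
        have h2 := sdecay f x
        have h3 := hC x
        have hinv : (0:ℝ) ≤ (1 + x ^ 2)⁻¹ := by positivity
        calc |f x * g x| = |f x| * |g x| := abs_mul _ _
          _ ≤ (SN f * (1 + x ^ 2)⁻¹) * C :=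
              mul_le_mul h2 h3 (abs_nonneg _)
                (mul_nonneg (SN_nonneg f) (by positivity))
          _ = SN f * C * (1 + x ^ 2)⁻¹ := by ring
    _ = SN f * C * π := by
        rw [integral_const_mul, integral_univ_inv_one_add_sq]
    _ = π * (SN f * C) := by ring


lemma Q_continuous : Continuous (Q : SchwartzMap ℝ ℝ → ℝ) :=
  (schwartz_withSeminorms ℝ ℝ ℝ).continuous_seminorm ((0, 0) : ℕ × ℕ)

lemma SN_continuous : Continuous (SN : SchwartzMap ℝ ℝ → ℝ) := by
  have h1 := (schwartz_withSeminorms ℝ ℝ ℝ).continuous_seminorm ((0, 0) : ℕ × ℕ)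
  have h2 := (schwartz_withSeminorms ℝ ℝ ℝ).continuous_seminorm ((2, 0) : ℕ × ℕ)
  exact h1.add h2

lemma Q_zero : Q (0 : SchwartzMap ℝ ℝ) = 0 := by
  unfold Q; exact map_zero _

lemma SN_zero : SN (0 : SchwartzMap ℝ ℝ) = 0 := by
  unfold SN; rw [map_zero, map_zero, add_zero]

lemma abs_integral_mul2_le (f g : SchwartzMap ℝ ℝ) :
    |∫ x, f x * g x| ≤ π * (SN f * Q g) :=
  abs_integral_mul_bdd f g.continuous (abs_le_Q g)

lemma abs_integral_mul3_le (f g h : SchwartzMap ℝ ℝ) :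
    |∫ x, f x * g x * h x| ≤ π * (SN f * (Q g * Q h)) := by
  have := abs_integral_mul_bdd f (g := fun x => g x * h x) (g.continuous.mul h.continuous)
    (C := Q g * Q h) (fun x => by
      rw [abs_mul]
      exact mul_le_mul (abs_le_Q g x) (abs_le_Q h x) (abs_nonneg _) (Q_nonneg g))
  simpa only [mul_assoc] using this

lemma abs_integral_mul4_le (f g h k : SchwartzMap ℝ ℝ) :
    |∫ x, f x * g x * h x * k x| ≤ π * (SN f * (Q g * (Q h * Q k))) := by
  have := abs_integral_mul_bdd f (g := fun x => g x * (h x * k x)) (g.continuous.mul (h.continuous.mul k.continuous))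
    (C := Q g * (Q h * Q k)) (fun x => by
      rw [abs_mul, abs_mul]
      refine mul_le_mul (abs_le_Q g x) ?_ (by positivity) (Q_nonneg g)
      exact mul_le_mul (abs_le_Q h x) (abs_le_Q k x) (abs_nonneg _) (Q_nonneg h))
  simpa only [mul_assoc] using this

lemma intAdd {f g : ℝ → ℝ} (hf : Integrable f (volume : Measure ℝ))
    (hg : Integrable g (volume : Measure ℝ)) :
    Integrable (fun x => f x + g x) (volume : Measure ℝ) := hf.add hg

variable {α : Type*} {l : Filter α}

lemma tendsto_SN_zero {u : α → SchwartzMap ℝ ℝ} (hu : Tendsto u l (𝓝 0)) :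
    Tendsto (fun a => SN (u a)) l (𝓝 0) := by
  have := (SN_continuous.tendsto 0).comp hu
  simpa [SN_zero, Function.comp_def] using this

lemma tendsto_Q {u : α → SchwartzMap ℝ ℝ} {U : SchwartzMap ℝ ℝ} (hu : Tendsto u l (𝓝 U)) :
    Tendsto (fun a => Q (u a)) l (𝓝 (Q U)) :=
  (Q_continuous.tendsto U).comp hu

lemma zero2 {u v : α → SchwartzMap ℝ ℝ} {V : SchwartzMap ℝ ℝ}
    (hu : Tendsto u l (𝓝 0)) (hv : Tendsto v l (𝓝 V)) :
    Tendsto (fun a => ∫ x, u a x * v a x) l (𝓝 0) := by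
  refine squeeze_zero_norm (fun a => by
    simpa [Real.norm_eq_abs] using abs_integral_mul2_le (u a) (v a)) ?_
  have : Tendsto (fun a => π * (SN (u a) * Q (v a))) l (𝓝 (π * (0 * Q V))) :=
    (((tendsto_SN_zero hu).mul (tendsto_Q hv))).const_mul π
  simpa using this

lemma zero3 {u v w : α → SchwartzMap ℝ ℝ} {V W : SchwartzMap ℝ ℝ}
    (hu : Tendsto u l (𝓝 0)) (hv : Tendsto v l (𝓝 V)) (hw : Tendsto w l (𝓝 W)) :
    Tendsto (fun a => ∫ x, u a x * v a x * w a x) l (𝓝 0) := by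
  refine squeeze_zero_norm (fun a => by
    simpa [Real.norm_eq_abs] using abs_integral_mul3_le (u a) (v a) (w a)) ?_
  have : Tendsto (fun a => π * (SN (u a) * (Q (v a) * Q (w a)))) l
      (𝓝 (π * (0 * (Q V * Q W)))) :=
    ((tendsto_SN_zero hu).mul ((tendsto_Q hv).mul (tendsto_Q hw))).const_mul π
  simpa using this

lemma zero4 {u v w z : α → SchwartzMap ℝ ℝ} {V W Z : SchwartzMap ℝ ℝ}
    (hu : Tendsto u l (𝓝 0)) (hv : Tendsto v l (𝓝 V)) (hw : Tendsto w l (𝓝 W))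
    (hz : Tendsto z l (𝓝 Z)) :
    Tendsto (fun a => ∫ x, u a x * v a x * w a x * z a x) l (𝓝 0) := by
  refine squeeze_zero_norm (fun a => by
    simpa [Real.norm_eq_abs] using abs_integral_mul4_le (u a) (v a) (w a) (z a)) ?_
  have : Tendsto (fun a => π * (SN (u a) * (Q (v a) * (Q (w a) * Q (z a))))) l
      (𝓝 (π * (0 * (Q V * (Q W * Q Z))))) :=
    ((tendsto_SN_zero hu).mul ((tendsto_Q hv).mul ((tendsto_Q hw).mul (tendsto_Q hz)))).const_mul π
  simpa using this

lemma tendsto2 {u v : α → SchwartzMap ℝ ℝ} {U V : SchwartzMap ℝ ℝ}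
    (hu : Tendsto u l (𝓝 U)) (hv : Tendsto v l (𝓝 V)) :
    Tendsto (fun a => ∫ x, u a x * v a x) l (𝓝 (∫ x, U x * V x)) := by
  have keyInt : ∀ a, (∫ x, u a x * v a x) =
      (∫ x, (u a - U) x * v a x) + ((∫ x, (v a - V) x * U x) + ∫ x, U x * V x) := by
    intro a
    have h1 : (fun x => u a x * v a x) =
        fun x => (u a - U) x * v a x + ((v a - V) x * U x + U x * V x) := by
      funext x; simp only [SchwartzMap.sub_apply]; ring
    have e1 : ∫ x, ((v a - V) x * U x + U x * V x) =
        (∫ x, (v a - V) x * U x) + ∫ x, U x * V x :=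
      integral_add (integrable_mul2 _ _) (integrable_mul2 _ _)
    have e2 : ∫ x, ((u a - U) x * v a x + ((v a - V) x * U x + U x * V x)) =
        (∫ x, (u a - U) x * v a x) + ∫ x, ((v a - V) x * U x + U x * V x) :=
      integral_add (integrable_mul2 _ _) (intAdd (integrable_mul2 _ _) (integrable_mul2 _ _))
    rw [h1, e2, e1]
  refine Tendsto.congr (fun a => (keyInt a).symm) ?_
  have h1 : Tendsto (fun a => u a - U) l (𝓝 0) := by simpa using hu.sub (tendsto_const_nhds (x := U))
  have h2 : Tendsto (fun a => v a - V) l (𝓝 0) := by simpa using hv.sub (tendsto_const_nhds (x := V))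
  have := (zero2 h1 hv).add ((zero2 h2 (tendsto_const_nhds (x := U))).add
    (tendsto_const_nhds (x := ∫ x, U x * V x)))
  simpa using this

lemma tendsto3 {u v w : α → SchwartzMap ℝ ℝ} {U V W : SchwartzMap ℝ ℝ}
    (hu : Tendsto u l (𝓝 U)) (hv : Tendsto v l (𝓝 V)) (hw : Tendsto w l (𝓝 W)) :
    Tendsto (fun a => ∫ x, u a x * v a x * w a x) l (𝓝 (∫ x, U x * V x * W x)) := by
  have keyInt : ∀ a, (∫ x, u a x * v a x * w a x) =
      (∫ x, (u a - U) x * v a x * w a x) + ((∫ x, (v a - V) x * U x * w a x) +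
        ((∫ x, (w a - W) x * U x * V x) + ∫ x, U x * V x * W x)) := by
    intro a
    have h1 : (fun x => u a x * v a x * w a x) =
        fun x => (u a - U) x * v a x * w a x + ((v a - V) x * U x * w a x +
          ((w a - W) x * U x * V x + U x * V x * W x)) := by
      funext x; simp only [SchwartzMap.sub_apply]; ring
    have e1 : ∫ x, ((w a - W) x * U x * V x + U x * V x * W x) =
        (∫ x, (w a - W) x * U x * V x) + ∫ x, U x * V x * W x :=
      integral_add (integrable_mul3 _ _ _) (integrable_mul3 _ _ _)
    have e2 : ∫ x, ((v a - V) x * U x * w a x + ((w a - W) x * U x * V x + U x * V x * W x)) =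
        (∫ x, (v a - V) x * U x * w a x) +
          ∫ x, ((w a - W) x * U x * V x + U x * V x * W x) :=
      integral_add (integrable_mul3 _ _ _) (intAdd (integrable_mul3 _ _ _) (integrable_mul3 _ _ _))
    have e3 : ∫ x, ((u a - U) x * v a x * w a x + ((v a - V) x * U x * w a x +
          ((w a - W) x * U x * V x + U x * V x * W x))) =
        (∫ x, (u a - U) x * v a x * w a x) +
          ∫ x, ((v a - V) x * U x * w a x + ((w a - W) x * U x * V x + U x * V x * W x)) :=
      integral_add (integrable_mul3 _ _ _) (intAdd (integrable_mul3 _ _ _)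
        (intAdd (integrable_mul3 _ _ _) (integrable_mul3 _ _ _)))
    rw [h1, e3, e2, e1]
  refine Tendsto.congr (fun a => (keyInt a).symm) ?_
  have h1 : Tendsto (fun a => u a - U) l (𝓝 0) := by simpa using hu.sub (tendsto_const_nhds (x := U))
  have h2 : Tendsto (fun a => v a - V) l (𝓝 0) := by simpa using hv.sub (tendsto_const_nhds (x := V))
  have h3 : Tendsto (fun a => w a - W) l (𝓝 0) := by simpa using hw.sub (tendsto_const_nhds (x := W))
  have := (zero3 h1 hv hw).add ((zero3 h2 (tendsto_const_nhds (x := U)) hw).add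
    ((zero3 h3 (tendsto_const_nhds (x := U)) (tendsto_const_nhds (x := V))).add
      (tendsto_const_nhds (x := ∫ x, U x * V x * W x))))
  simpa using this

lemma tendsto4 {u v w z : α → SchwartzMap ℝ ℝ} {U V W Z : SchwartzMap ℝ ℝ}
    (hu : Tendsto u l (𝓝 U)) (hv : Tendsto v l (𝓝 V)) (hw : Tendsto w l (𝓝 W))
    (hz : Tendsto z l (𝓝 Z)) :
    Tendsto (fun a => ∫ x, u a x * v a x * w a x * z a x) l
      (𝓝 (∫ x, U x * V x * W x * Z x)) := by
  have keyInt : ∀ a, (∫ x, u a x * v a x * w a x * z a x) =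
      (∫ x, (u a - U) x * v a x * w a x * z a x) + ((∫ x, (v a - V) x * U x * w a x * z a x) +
        ((∫ x, (w a - W) x * U x * V x * z a x) +
          ((∫ x, (z a - Z) x * U x * V x * W x) + ∫ x, U x * V x * W x * Z x))) := by
    intro a
    have h1 : (fun x => u a x * v a x * w a x * z a x) =
        fun x => (u a - U) x * v a x * w a x * z a x + ((v a - V) x * U x * w a x * z a x +
          ((w a - W) x * U x * V x * z a x +
            ((z a - Z) x * U x * V x * W x + U x * V x * W x * Z x))) := by
      funext x; simp only [SchwartzMap.sub_apply]; ring
    have e1 : ∫ x, ((z a - Z) x * U x * V x * W x + U x * V x * W x * Z x) =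
        (∫ x, (z a - Z) x * U x * V x * W x) + ∫ x, U x * V x * W x * Z x :=
      integral_add (integrable_mul4 _ _ _ _) (integrable_mul4 _ _ _ _)
    have e2 : ∫ x, ((w a - W) x * U x * V x * z a x +
          ((z a - Z) x * U x * V x * W x + U x * V x * W x * Z x)) =
        (∫ x, (w a - W) x * U x * V x * z a x) +
          ∫ x, ((z a - Z) x * U x * V x * W x + U x * V x * W x * Z x) :=
      integral_add (integrable_mul4 _ _ _ _)
        (intAdd (integrable_mul4 _ _ _ _) (integrable_mul4 _ _ _ _))
    have e3 : ∫ x, ((v a - V) x * U x * w a x * z a x + ((w a - W) x * U x * V x * z a x +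
          ((z a - Z) x * U x * V x * W x + U x * V x * W x * Z x))) =
        (∫ x, (v a - V) x * U x * w a x * z a x) +
          ∫ x, ((w a - W) x * U x * V x * z a x +
            ((z a - Z) x * U x * V x * W x + U x * V x * W x * Z x)) :=
      integral_add (integrable_mul4 _ _ _ _) (intAdd (integrable_mul4 _ _ _ _)
        (intAdd (integrable_mul4 _ _ _ _) (integrable_mul4 _ _ _ _)))
    have e4 : ∫ x, ((u a - U) x * v a x * w a x * z a x +
          ((v a - V) x * U x * w a x * z a x + ((w a - W) x * U x * V x * z a x +
            ((z a - Z) x * U x * V x * W x + U x * V x * W x * Z x)))) =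
        (∫ x, (u a - U) x * v a x * w a x * z a x) +
          ∫ x, ((v a - V) x * U x * w a x * z a x + ((w a - W) x * U x * V x * z a x +
            ((z a - Z) x * U x * V x * W x + U x * V x * W x * Z x))) :=
      integral_add (integrable_mul4 _ _ _ _) (intAdd (integrable_mul4 _ _ _ _)
        (intAdd (integrable_mul4 _ _ _ _)
          (intAdd (integrable_mul4 _ _ _ _) (integrable_mul4 _ _ _ _))))
    rw [h1, e4, e3, e2, e1]
  refine Tendsto.congr (fun a => (keyInt a).symm) ?_
  have h1 : Tendsto (fun a => u a - U) l (𝓝 0) := by simpa using hu.sub (tendsto_const_nhds (x := U))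
  have h2 : Tendsto (fun a => v a - V) l (𝓝 0) := by simpa using hv.sub (tendsto_const_nhds (x := V))
  have h3 : Tendsto (fun a => w a - W) l (𝓝 0) := by simpa using hw.sub (tendsto_const_nhds (x := W))
  have h4 : Tendsto (fun a => z a - Z) l (𝓝 0) := by simpa using hz.sub (tendsto_const_nhds (x := Z))
  have := (zero4 h1 hv hw hz).add ((zero4 h2 (tendsto_const_nhds (x := U)) hw hz).add
    ((zero4 h3 (tendsto_const_nhds (x := U)) (tendsto_const_nhds (x := V)) hz).add
      ((zero4 h4 (tendsto_const_nhds (x := U)) (tendsto_const_nhds (x := V))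
          (tendsto_const_nhds (x := W))).add
        (tendsto_const_nhds (x := ∫ x, U x * V x * W x * Z x)))))
  simpa using this

variable {s : Set ℝ} {t : ℝ}

/-- slope convergence implies plain convergence of the curve -/
lemma slope_tendsto_const {c : ℝ → SchwartzMap ℝ ℝ} {c' : SchwartzMap ℝ ℝ}
    (hc : Tendsto (fun y => (y - t)⁻¹ • (c y - c t)) (𝓝[s \ {t}] t) (𝓝 c')) :
    Tendsto c (𝓝[s \ {t}] t) (𝓝 (c t)) := by
  have hsub : Tendsto (fun y : ℝ => y - t) (𝓝[s \ {t}] t) (𝓝 0) := by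
    have h : Tendsto (fun y : ℝ => y - t) (𝓝 t) (𝓝 (t - t)) :=
      (continuous_id.sub continuous_const).tendsto t
    simpa using h.mono_left nhdsWithin_le_nhds
  have h2 : Tendsto (fun y => (y - t) • ((y - t)⁻¹ • (c y - c t)))
      (𝓝[s \ {t}] t) (𝓝 ((0:ℝ) • c')) := hsub.smul hc
  have h3 : ∀ᶠ y in 𝓝[s \ {t}] t,
      (y - t) • ((y - t)⁻¹ • (c y - c t)) = c y - c t := by
    filter_upwards [self_mem_nhdsWithin] with y hy
    have hne : y - t ≠ 0 := sub_ne_zero.2 hy.2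
    rw [smul_smul, mul_inv_cancel₀ hne, one_smul]
  have h4 : Tendsto (fun y => c y - c t) (𝓝[s \ {t}] t) (𝓝 0) := by
    have := h2.congr' h3
    simpa using this
  have := h4.add (tendsto_const_nhds (x := c t))
  simpa using this

/-- slope convergence is preserved by continuous linear maps -/
lemma slope_comp_clm {c : ℝ → SchwartzMap ℝ ℝ} {c' : SchwartzMap ℝ ℝ}
    (A : SchwartzMap ℝ ℝ →L[ℝ] SchwartzMap ℝ ℝ)
    (hc : Tendsto (fun y => (y - t)⁻¹ • (c y - c t)) (𝓝[s \ {t}] t) (𝓝 c')) :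
    Tendsto (fun y => (y - t)⁻¹ • (A (c y) - A (c t))) (𝓝[s \ {t}] t) (𝓝 (A c')) := by
  have h := (A.continuous.tendsto c').comp hc
  refine Tendsto.congr (fun y => ?_) h
  simp only [Function.comp]
  rw [_root_.map_smul, map_sub]

lemma hasDeriv_int2 {u v : ℝ → SchwartzMap ℝ ℝ} {u' v' : SchwartzMap ℝ ℝ}
    (hu : Tendsto (fun y => (y - t)⁻¹ • (u y - u t)) (𝓝[s \ {t}] t) (𝓝 u'))
    (hv : Tendsto (fun y => (y - t)⁻¹ • (v y - v t)) (𝓝[s \ {t}] t) (𝓝 v')) :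
    HasDerivWithinAt (fun y => ∫ x, u y x * v y x)
      ((∫ x, u' x * v t x) + ∫ x, v' x * u t x) s t := by
  rw [hasDerivWithinAt_iff_tendsto_slope]
  have hvc := slope_tendsto_const hv
  have key : ∀ y : ℝ, slope (fun y => ∫ x, u y x * v y x) t y =
      (∫ x, ((y - t)⁻¹ • (u y - u t)) x * v y x) +
        ∫ x, ((y - t)⁻¹ • (v y - v t)) x * u t x := by
    intro y
    rw [slope_def_field, div_eq_inv_mul,
      ← integral_sub (integrable_mul2 _ _) (integrable_mul2 _ _), ← smul_eq_mul, ← integral_smul]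
    have h1 : (fun x => (y - t)⁻¹ • (u y x * v y x - u t x * v t x)) =
        fun x => ((y - t)⁻¹ • (u y - u t)) x * v y x +
          ((y - t)⁻¹ • (v y - v t)) x * u t x := by
      funext x
      simp only [SchwartzMap.smul_apply, SchwartzMap.sub_apply, smul_eq_mul]
      ring
    rw [h1]
    exact integral_add (integrable_mul2 _ _) (integrable_mul2 _ _)
  refine Tendsto.congr (fun y => (key y).symm) ?_
  exact (tendsto2 hu hvc).add (tendsto2 hv (tendsto_const_nhds (x := u t)))

lemma hasDeriv_int3 {u v w : ℝ → SchwartzMap ℝ ℝ} {u' v' w' : SchwartzMap ℝ ℝ}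
    (hu : Tendsto (fun y => (y - t)⁻¹ • (u y - u t)) (𝓝[s \ {t}] t) (𝓝 u'))
    (hv : Tendsto (fun y => (y - t)⁻¹ • (v y - v t)) (𝓝[s \ {t}] t) (𝓝 v'))
    (hw : Tendsto (fun y => (y - t)⁻¹ • (w y - w t)) (𝓝[s \ {t}] t) (𝓝 w')) :
    HasDerivWithinAt (fun y => ∫ x, u y x * v y x * w y x)
      ((∫ x, u' x * v t x * w t x) + ((∫ x, v' x * u t x * w t x) +
        ∫ x, w' x * u t x * v t x)) s t := by
  rw [hasDerivWithinAt_iff_tendsto_slope]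
  have hvc := slope_tendsto_const hv
  have hwc := slope_tendsto_const hw
  have key : ∀ y : ℝ, slope (fun y => ∫ x, u y x * v y x * w y x) t y =
      (∫ x, ((y - t)⁻¹ • (u y - u t)) x * v y x * w y x) +
        ((∫ x, ((y - t)⁻¹ • (v y - v t)) x * u t x * w y x) +
          ∫ x, ((y - t)⁻¹ • (w y - w t)) x * u t x * v t x) := by
    intro y
    rw [slope_def_field, div_eq_inv_mul,
      ← integral_sub (integrable_mul3 _ _ _) (integrable_mul3 _ _ _), ← smul_eq_mul, ← integral_smul]
    have h1 : (fun x => (y - t)⁻¹ • (u y x * v y x * w y x - u t x * v t x * w t x)) =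
        fun x => ((y - t)⁻¹ • (u y - u t)) x * v y x * w y x +
          (((y - t)⁻¹ • (v y - v t)) x * u t x * w y x +
            ((y - t)⁻¹ • (w y - w t)) x * u t x * v t x) := by
      funext x
      simp only [SchwartzMap.smul_apply, SchwartzMap.sub_apply, smul_eq_mul]
      ring
    rw [h1]
    have e1 : ∫ x, (((y - t)⁻¹ • (v y - v t)) x * u t x * w y x +
          ((y - t)⁻¹ • (w y - w t)) x * u t x * v t x) =
        (∫ x, ((y - t)⁻¹ • (v y - v t)) x * u t x * w y x) +
          ∫ x, ((y - t)⁻¹ • (w y - w t)) x * u t x * v t x :=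
      integral_add (integrable_mul3 _ _ _) (integrable_mul3 _ _ _)
    have e2 : ∫ x, (((y - t)⁻¹ • (u y - u t)) x * v y x * w y x +
          (((y - t)⁻¹ • (v y - v t)) x * u t x * w y x +
            ((y - t)⁻¹ • (w y - w t)) x * u t x * v t x)) =
        (∫ x, ((y - t)⁻¹ • (u y - u t)) x * v y x * w y x) +
          ∫ x, (((y - t)⁻¹ • (v y - v t)) x * u t x * w y x +
            ((y - t)⁻¹ • (w y - w t)) x * u t x * v t x) :=
      integral_add (integrable_mul3 _ _ _)
        ((integrable_mul3 _ _ _).add (integrable_mul3 _ _ _))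
    rw [e2, e1]
  refine Tendsto.congr (fun y => (key y).symm) ?_
  exact (tendsto3 hu hvc hwc).add ((tendsto3 hv (tendsto_const_nhds (x := u t)) hwc).add
    (tendsto3 hw (tendsto_const_nhds (x := u t)) (tendsto_const_nhds (x := v t))))

lemma hasDeriv_int4 {u v w z : ℝ → SchwartzMap ℝ ℝ} {u' v' w' z' : SchwartzMap ℝ ℝ}
    (hu : Tendsto (fun y => (y - t)⁻¹ • (u y - u t)) (𝓝[s \ {t}] t) (𝓝 u'))
    (hv : Tendsto (fun y => (y - t)⁻¹ • (v y - v t)) (𝓝[s \ {t}] t) (𝓝 v'))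
    (hw : Tendsto (fun y => (y - t)⁻¹ • (w y - w t)) (𝓝[s \ {t}] t) (𝓝 w'))
    (hz : Tendsto (fun y => (y - t)⁻¹ • (z y - z t)) (𝓝[s \ {t}] t) (𝓝 z')) :
    HasDerivWithinAt (fun y => ∫ x, u y x * v y x * w y x * z y x)
      ((∫ x, u' x * v t x * w t x * z t x) + ((∫ x, v' x * u t x * w t x * z t x) +
        ((∫ x, w' x * u t x * v t x * z t x) + ∫ x, z' x * u t x * v t x * w t x))) s t := by
  rw [hasDerivWithinAt_iff_tendsto_slope]
  have hvc := slope_tendsto_const hv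
  have hwc := slope_tendsto_const hw
  have hzc := slope_tendsto_const hz
  have key : ∀ y : ℝ, slope (fun y => ∫ x, u y x * v y x * w y x * z y x) t y =
      (∫ x, ((y - t)⁻¹ • (u y - u t)) x * v y x * w y x * z y x) +
        ((∫ x, ((y - t)⁻¹ • (v y - v t)) x * u t x * w y x * z y x) +
          ((∫ x, ((y - t)⁻¹ • (w y - w t)) x * u t x * v t x * z y x) +
            ∫ x, ((y - t)⁻¹ • (z y - z t)) x * u t x * v t x * w t x)) := by
    intro y
    rw [slope_def_field, div_eq_inv_mul,
      ← integral_sub (integrable_mul4 _ _ _ _) (integrable_mul4 _ _ _ _), ← smul_eq_mul, ← integral_smul]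
    have h1 : (fun x => (y - t)⁻¹ •
          (u y x * v y x * w y x * z y x - u t x * v t x * w t x * z t x)) =
        fun x => ((y - t)⁻¹ • (u y - u t)) x * v y x * w y x * z y x +
          (((y - t)⁻¹ • (v y - v t)) x * u t x * w y x * z y x +
            (((y - t)⁻¹ • (w y - w t)) x * u t x * v t x * z y x +
              ((y - t)⁻¹ • (z y - z t)) x * u t x * v t x * w t x)) := by
      funext x
      simp only [SchwartzMap.smul_apply, SchwartzMap.sub_apply, smul_eq_mul]
      ring
    rw [h1]
    have e1 : ∫ x, (((y - t)⁻¹ • (w y - w t)) x * u t x * v t x * z y x +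
          ((y - t)⁻¹ • (z y - z t)) x * u t x * v t x * w t x) =
        (∫ x, ((y - t)⁻¹ • (w y - w t)) x * u t x * v t x * z y x) +
          ∫ x, ((y - t)⁻¹ • (z y - z t)) x * u t x * v t x * w t x :=
      integral_add (integrable_mul4 _ _ _ _) (integrable_mul4 _ _ _ _)
    have e2 : ∫ x, (((y - t)⁻¹ • (v y - v t)) x * u t x * w y x * z y x +
          (((y - t)⁻¹ • (w y - w t)) x * u t x * v t x * z y x +
            ((y - t)⁻¹ • (z y - z t)) x * u t x * v t x * w t x)) =
        (∫ x, ((y - t)⁻¹ • (v y - v t)) x * u t x * w y x * z y x) +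
          ∫ x, (((y - t)⁻¹ • (w y - w t)) x * u t x * v t x * z y x +
            ((y - t)⁻¹ • (z y - z t)) x * u t x * v t x * w t x) :=
      integral_add (integrable_mul4 _ _ _ _)
        ((integrable_mul4 _ _ _ _).add (integrable_mul4 _ _ _ _))
    have e3 : ∫ x, (((y - t)⁻¹ • (u y - u t)) x * v y x * w y x * z y x +
          (((y - t)⁻¹ • (v y - v t)) x * u t x * w y x * z y x +
            (((y - t)⁻¹ • (w y - w t)) x * u t x * v t x * z y x +
              ((y - t)⁻¹ • (z y - z t)) x * u t x * v t x * w t x))) =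
        (∫ x, ((y - t)⁻¹ • (u y - u t)) x * v y x * w y x * z y x) +
          ∫ x, (((y - t)⁻¹ • (v y - v t)) x * u t x * w y x * z y x +
            (((y - t)⁻¹ • (w y - w t)) x * u t x * v t x * z y x +
              ((y - t)⁻¹ • (z y - z t)) x * u t x * v t x * w t x)) :=
      integral_add (integrable_mul4 _ _ _ _) ((integrable_mul4 _ _ _ _).add
        ((integrable_mul4 _ _ _ _).add (integrable_mul4 _ _ _ _)))
    rw [e3, e2, e1]
  refine Tendsto.congr (fun y => (key y).symm) ?_
  exact (tendsto4 hu hvc hwc hzc).add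
    ((tendsto4 hv (tendsto_const_nhds (x := u t)) hwc hzc).add
      ((tendsto4 hw (tendsto_const_nhds (x := u t)) (tendsto_const_nhds (x := v t)) hzc).add
        (tendsto4 hz (tendsto_const_nhds (x := u t)) (tendsto_const_nhds (x := v t))
          (tendsto_const_nhds (x := w t)))))

lemma d_coe (f : SchwartzMap ℝ ℝ) : ⇑(dd f) = deriv ⇑f :=
  funext fun x => SchwartzMap.derivCLM_apply ℝ f x

lemma hasDerivAt_schwartz (f : SchwartzMap ℝ ℝ) (x : ℝ) :
    HasDerivAt (⇑f) (dd f x) x := by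
  have h := (f.differentiableAt (x := x)).hasDerivAt
  rwa [← d_coe] at h

lemma iterD (f : SchwartzMap ℝ ℝ) (n : ℕ) :
    iteratedDeriv n ⇑f = ⇑((fun g => dd g)^[n] f) := by
  induction n with
  | zero => simp [iteratedDeriv_zero]
  | succ n ih =>
      rw [iteratedDeriv_succ, ih, Function.iterate_succ_apply', ← d_coe]

lemma id2 (f : SchwartzMap ℝ ℝ) : iteratedDeriv 2 ⇑f = ⇑(dd (dd f)) := by
  rw [iterD f 2]; rfl
lemma id3 (f : SchwartzMap ℝ ℝ) : iteratedDeriv 3 ⇑f = ⇑(dd (dd (dd f))) := by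
  rw [iterD f 3]; rfl
lemma id4 (f : SchwartzMap ℝ ℝ) : iteratedDeriv 4 ⇑f = ⇑(dd (dd (dd (dd f)))) := by
  rw [iterD f 4]; rfl
lemma id5 (f : SchwartzMap ℝ ℝ) : iteratedDeriv 5 ⇑f = ⇑(dd (dd (dd (dd (dd f))))) := by
  rw [iterD f 5]; rfl

lemma schwartz_tendsto_zero (f : SchwartzMap ℝ ℝ) {l : Filter ℝ}
    (hl : Tendsto (fun x : ℝ => |x|) l atTop) : Tendsto ⇑f l (𝓝 0) := by
  refine squeeze_zero_norm (fun x => by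
    simpa [Real.norm_eq_abs] using sdecay f x) ?_
  have h2 : Tendsto (fun x : ℝ => 1 + x ^ 2) l atTop := by
    have : Tendsto (fun x : ℝ => 1 + |x| ^ 2) l atTop :=
      tendsto_atTop_add_const_left _ 1 ((tendsto_pow_atTop two_ne_zero).comp hl)
    simpa [sq_abs] using this
  have h3 : Tendsto (fun x : ℝ => (1 + x ^ 2)⁻¹) l (𝓝 0) :=
    tendsto_inv_atTop_zero.comp h2
  simpa using h3.const_mul (SN f)

lemma schwartz_zero_atTop (f : SchwartzMap ℝ ℝ) : Tendsto ⇑f atTop (𝓝 0) :=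
  schwartz_tendsto_zero f tendsto_abs_atTop_atTop

lemma schwartz_zero_atBot (f : SchwartzMap ℝ ℝ) : Tendsto ⇑f atBot (𝓝 0) :=
  schwartz_tendsto_zero f tendsto_abs_atBot_atTop

/-- integration by parts for Schwartz functions -/
lemma ibp_schwartz (f g : SchwartzMap ℝ ℝ) :
    ∫ x, dd f x * g x = -∫ x, f x * dd g x := by
  have hF : ∀ x, HasDerivAt (fun y => f y * g y) (dd f x * g x + f x * dd g x) x :=
    fun x => (hasDerivAt_schwartz f x).mul (hasDerivAt_schwartz g x)
  have hint1 := integrable_mul2 (dd f) g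
  have hint2 := integrable_mul2 f (dd g)
  have htop : Tendsto (fun y => f y * g y) atTop (𝓝 0) := by
    simpa using (schwartz_zero_atTop f).mul (schwartz_zero_atTop g)
  have hbot : Tendsto (fun y => f y * g y) atBot (𝓝 0) := by
    simpa using (schwartz_zero_atBot f).mul (schwartz_zero_atBot g)
  have h0 : ∫ x, (dd f x * g x + f x * dd g x) = 0 - 0 :=
    integral_of_hasDerivAt_of_tendsto hF (intAdd hint1 hint2) hbot htop
  rw [integral_add hint1 hint2] at h0
  linarith

lemma integral_self_deriv (f : SchwartzMap ℝ ℝ) : ∫ x, dd f x * f x = 0 := by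
  have h := ibp_schwartz f f
  have e : ∫ x, f x * dd f x = ∫ x, dd f x * f x := by
    congr 1; funext x; ring
  rw [e] at h
  linarith

lemma integral_triple_deriv (f g h : SchwartzMap ℝ ℝ) :
    (∫ x, dd f x * g x * h x) + ((∫ x, f x * dd g x * h x) +
      ∫ x, f x * g x * dd h x) = 0 := by
  have hF : ∀ x, HasDerivAt (fun y => f y * g y * h y)
      (dd f x * g x * h x + (f x * dd g x * h x + f x * g x * dd h x)) x := by
    intro x
    have H := ((hasDerivAt_schwartz f x).mul (hasDerivAt_schwartz g x)).mul
      (hasDerivAt_schwartz h x)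
    exact H.congr_deriv (by simp only [Pi.mul_apply]; ring)
  have h1 := integrable_mul3 (dd f) g h
  have h2 := integrable_mul3 f (dd g) h
  have h3 := integrable_mul3 f g (dd h)
  have htop : Tendsto (fun y => f y * g y * h y) atTop (𝓝 0) := by
    simpa using ((schwartz_zero_atTop f).mul (schwartz_zero_atTop g)).mul
      (schwartz_zero_atTop h)
  have hbot : Tendsto (fun y => f y * g y * h y) atBot (𝓝 0) := by
    simpa using ((schwartz_zero_atBot f).mul (schwartz_zero_atBot g)).mul
      (schwartz_zero_atBot h)
  have h0 : ∫ x, (dd f x * g x * h x + (f x * dd g x * h x + f x * g x * dd h x)) = 0 - 0 :=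
    integral_of_hasDerivAt_of_tendsto hF (intAdd h1 (intAdd h2 h3)) hbot htop
  have e2 : ∫ x, (f x * dd g x * h x + f x * g x * dd h x) =
      (∫ x, f x * dd g x * h x) + ∫ x, f x * g x * dd h x := integral_add h2 h3
  have e1 : ∫ x, (dd f x * g x * h x + (f x * dd g x * h x + f x * g x * dd h x)) =
      (∫ x, dd f x * g x * h x) +
        ∫ x, (f x * dd g x * h x + f x * g x * dd h x) :=
    integral_add h1 (intAdd h2 h3)
  rw [e1, e2] at h0
  linarith

/-- the key skew-symmetry cancellation -/
lemma skew_vanish (ψ : SchwartzMap ℝ ℝ) (γ1 δ1 : ℝ) (g : ℝ → ℝ)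
    (hg : ∀ x, HasDerivAt g
      (-(ψ x) + γ1 * dd (dd ψ) x - δ1 * dd (dd (dd (dd ψ))) x) x)
    (hgbot : Tendsto g atBot (𝓝 0)) (hgtop : Tendsto g atTop (𝓝 0))
    (hgψ : Integrable (fun x => g x * ψ x)) :
    ∫ x, g x * ψ x = 0 := by
  set p1 := dd ψ with hp1
  set p2 := dd p1 with hp2
  set p3 := dd p2 with hp3
  set p4 := dd p3 with hp4
  -- Step 1 : ∫ ψ = 0
  have hψ0 : ∫ x, ψ x = 0 := by
    have hΦ : ∀ x, HasDerivAt (fun y => γ1 * p1 y - δ1 * p3 y - g y) (ψ x) x := by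
      intro x
      have h := (((hasDerivAt_schwartz p1 x).const_mul γ1).sub
        ((hasDerivAt_schwartz p3 x).const_mul δ1)).sub (hg x)
      exact h.congr_deriv (by ring)
    have htop : Tendsto (fun y => γ1 * p1 y - δ1 * p3 y - g y) atTop (𝓝 0) := by
      have := (((schwartz_zero_atTop p1).const_mul γ1).sub
        ((schwartz_zero_atTop p3).const_mul δ1)).sub hgtop
      simpa using this
    have hbot : Tendsto (fun y => γ1 * p1 y - δ1 * p3 y - g y) atBot (𝓝 0) := by
      have := (((schwartz_zero_atBot p1).const_mul γ1).sub
        ((schwartz_zero_atBot p3).const_mul δ1)).sub hgbot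
      simpa using this
    have h0 : ∫ x, ψ x = 0 - 0 :=
      integral_of_hasDerivAt_of_tendsto hΦ (ψ.integrable) hbot htop
    simpa using h0
  -- Step 2 : the primitive V
  set V : ℝ → ℝ := fun x => ∫ y in (0:ℝ)..x, ψ y with hV
  have hVd : ∀ x, HasDerivAt V (ψ x) x := by
    intro x
    exact intervalIntegral.integral_hasDerivAt_right
      (ψ.integrable.intervalIntegrable)
      ψ.continuous.stronglyMeasurable.stronglyMeasurableAtFilter
      ψ.continuous.continuousAt
  have hVcont : Continuous V := by
    rw [continuous_iff_continuousAt]; exact fun x => (hVd x).continuousAt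
  have hVb : ∀ x, |V x| ≤ ∫ y, |ψ y| := by
    intro x
    calc |V x| ≤ ∫ y in Set.uIoc (0:ℝ) x, |ψ y| := by
          simpa [Real.norm_eq_abs] using
            intervalIntegral.norm_integral_le_integral_norm_uIoc (f := ⇑ψ) (a := (0:ℝ)) (b := x)
      _ ≤ ∫ y, |ψ y| := by
          refine setIntegral_le_integral ψ.integrable.abs ?_
          filter_upwards with y using abs_nonneg _
  -- limits of V
  have hsplit : (∫ x in Iic (0:ℝ), ψ x) + ∫ x in Ioi (0:ℝ), ψ x = ∫ x, ψ x := by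
    have h := setIntegral_union (μ := volume) (f := fun x : ℝ => ψ x)
      (Iic_disjoint_Ioi (le_refl (0:ℝ))) measurableSet_Ioi
      ψ.integrable.integrableOn ψ.integrable.integrableOn
    rw [Set.Iic_union_Ioi, setIntegral_univ] at h
    exact h.symm
  set c : ℝ := ∫ x in Ioi (0:ℝ), ψ x with hc
  have hVtop : Tendsto V atTop (𝓝 c) :=
    intervalIntegral_tendsto_integral_Ioi 0 ψ.integrable.integrableOn tendsto_id
  have hVbot : Tendsto V atBot (𝓝 c) := by
    have h1 : Tendsto (fun a : ℝ => ∫ x in a..(0:ℝ), ψ x) atBot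
        (𝓝 (∫ x in Iic (0:ℝ), ψ x)) :=
      intervalIntegral_tendsto_integral_Iic 0 ψ.integrable.integrableOn tendsto_id
    have h2 : Tendsto (fun a : ℝ => -∫ x in a..(0:ℝ), ψ x) atBot
        (𝓝 (-∫ x in Iic (0:ℝ), ψ x)) := h1.neg
    have h3 : V = fun a : ℝ => -∫ x in a..(0:ℝ), ψ x := by
      funext a
      show (∫ y in (0:ℝ)..a, ψ y) = -∫ x in a..(0:ℝ), ψ x
      exact intervalIntegral.integral_symm a 0
    rw [h3]
    have : -∫ x in Iic (0:ℝ), ψ x = c := by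
      rw [hψ0] at hsplit; rw [hc]; linarith
    rwa [this] at h2
  -- Integrability of products with V
  have hVint : ∀ f : SchwartzMap ℝ ℝ, Integrable (fun x => f x * V x) :=
    fun f => integrable_mul_bdd f hVcont hVb
  -- ∫ ψ V = 0
  have hψV : ∫ x, ψ x * V x = 0 := by
    have hF : ∀ x, HasDerivAt (fun y => V y * V y) (ψ x * V x + V x * ψ x) x :=
      fun x => (hVd x).mul (hVd x)
    have hi1 : Integrable (fun x => ψ x * V x) := hVint ψ
    have hi2 : Integrable (fun x => V x * ψ x) := by
      have := hVint ψ
      exact this.congr (Filter.Eventually.of_forall fun x => mul_comm _ _)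
    have h0 : ∫ x, (ψ x * V x + V x * ψ x) = c * c - c * c :=
      integral_of_hasDerivAt_of_tendsto hF (intAdd hi1 hi2)
        (hVbot.mul hVbot) (hVtop.mul hVtop)
    rw [integral_add hi1 hi2] at h0
    have e : ∫ x, V x * ψ x = ∫ x, ψ x * V x := by congr 1; funext x; ring
    rw [e] at h0
    linarith
  -- ∫ p2 V = 0 and ∫ p4 V = 0
  have hd2V : ∫ x, p2 x * V x = 0 := by
    have hF : ∀ x, HasDerivAt (fun y => p1 y * V y) (p2 x * V x + p1 x * ψ x) x :=
      fun x => (hasDerivAt_schwartz p1 x).mul (hVd x)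
    have hi1 : Integrable (fun x => p2 x * V x) := hVint p2
    have hi2 : Integrable (fun x => p1 x * ψ x) := integrable_mul2 p1 ψ
    have h0 : ∫ x, (p2 x * V x + p1 x * ψ x) = 0 - 0 :=
      integral_of_hasDerivAt_of_tendsto hF (intAdd hi1 hi2)
        (by simpa using (schwartz_zero_atBot p1).mul hVbot)
        (by simpa using (schwartz_zero_atTop p1).mul hVtop)
    rw [integral_add hi1 hi2] at h0
    have e0 : ∫ x, p1 x * ψ x = 0 := by
      have := integral_self_deriv ψ
      rw [← this]
    linarith [e0 ▸ h0]
  have hd4V : ∫ x, p4 x * V x = 0 := by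
    have hF : ∀ x, HasDerivAt (fun y => p3 y * V y) (p4 x * V x + p3 x * ψ x) x :=
      fun x => (hasDerivAt_schwartz p3 x).mul (hVd x)
    have hi1 : Integrable (fun x => p4 x * V x) := hVint p4
    have hi2 : Integrable (fun x => p3 x * ψ x) := integrable_mul2 p3 ψ
    have h0 : ∫ x, (p4 x * V x + p3 x * ψ x) = 0 - 0 :=
      integral_of_hasDerivAt_of_tendsto hF (intAdd hi1 hi2)
        (by simpa using (schwartz_zero_atBot p3).mul hVbot)
        (by simpa using (schwartz_zero_atTop p3).mul hVtop)
    rw [integral_add hi1 hi2] at h0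
    have e1 : ∫ x, p3 x * ψ x = -∫ x, p2 x * p1 x := ibp_schwartz p2 ψ
    have e2 : ∫ x, p2 x * p1 x = 0 := by
      have := integral_self_deriv p1
      have e : ∫ x, p2 x * p1 x = ∫ x, dd p1 x * p1 x := by rfl
      rw [e, this]
    rw [e1, e2] at h0
    simpa using h0
  -- final : ∫ g ψ = 0
  have hF : ∀ x, HasDerivAt (fun y => g y * V y)
      ((-(ψ x) + γ1 * p2 x - δ1 * p4 x) * V x + g x * ψ x) x :=
    fun x => (hg x).mul (hVd x)
  have hi1 : Integrable (fun x => (-(ψ x) + γ1 * p2 x - δ1 * p4 x) * V x) := by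
    have h := ((hVint ψ).neg.add (((hVint p2).const_mul γ1).sub ((hVint p4).const_mul δ1)))
    refine h.congr (Filter.Eventually.of_forall fun x => ?_)
    simp only [Pi.add_apply, Pi.sub_apply, Pi.neg_apply]
    ring
  have h0 : ∫ x, ((-(ψ x) + γ1 * p2 x - δ1 * p4 x) * V x + g x * ψ x) = 0 - 0 :=
    integral_of_hasDerivAt_of_tendsto hF (intAdd hi1 hgψ)
      (by simpa using hgbot.mul hVbot) (by simpa using hgtop.mul hVtop)
  rw [integral_add hi1 hgψ] at h0
  have e : ∫ x, (-(ψ x) + γ1 * p2 x - δ1 * p4 x) * V x = 0 := by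
    have hsplit2 : (fun x => (-(ψ x) + γ1 * p2 x - δ1 * p4 x) * V x) =
        fun x => (-1 : ℝ) * (ψ x * V x) + (γ1 * (p2 x * V x) + (-δ1) * (p4 x * V x)) := by
      funext x; ring
    rw [hsplit2, integral_add ((hVint ψ).const_mul _)
        (intAdd ((hVint p2).const_mul _) ((hVint p4).const_mul _)),
      integral_add ((hVint p2).const_mul _) ((hVint p4).const_mul _),
      integral_const_mul, integral_const_mul, integral_const_mul, hψV, hd2V, hd4V]
    ring
  rw [e] at h0
  linarith

lemma deriv_mul2 (b : SchwartzMap ℝ ℝ) (x : ℝ) :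
    deriv (fun y => b y * b y) x = dd b x * b x + b x * dd b x :=
  ((hasDerivAt_schwartz b x).mul (hasDerivAt_schwartz b x)).deriv

lemma deriv_mul3 (b : SchwartzMap ℝ ℝ) (x : ℝ) :
    deriv (fun y => b y * (b y * b y)) x =
      dd b x * (b x * b x) + b x * (dd b x * b x + b x * dd b x) :=
  ((hasDerivAt_schwartz b x).mul
    ((hasDerivAt_schwartz b x).mul (hasDerivAt_schwartz b x))).deriv

lemma d3_mul2 (b : SchwartzMap ℝ ℝ) (x : ℝ) :
    iteratedDeriv 3 (fun y => b y * b y) x =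
      6 * (dd b x * dd (dd b) x) + 2 * (b x * dd (dd (dd b)) x) := by
  rw [show (3:ℕ) = 2 + 1 from rfl, iteratedDeriv_succ,
    show (2:ℕ) = 1 + 1 from rfl, iteratedDeriv_succ, iteratedDeriv_one]
  have h1 : deriv (fun y => b y * b y) = fun y => dd b y * b y + b y * dd b y :=
    funext fun y => deriv_mul2 b y
  rw [h1]
  have h2 : deriv (fun y => dd b y * b y + b y * dd b y) =
      fun y => (dd (dd b) y * b y + dd b y * dd b y) +
        (dd b y * dd b y + b y * dd (dd b) y) :=
    funext fun y => (((hasDerivAt_schwartz (dd b) y).mul (hasDerivAt_schwartz b y)).add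
      ((hasDerivAt_schwartz b y).mul (hasDerivAt_schwartz (dd b) y))).deriv
  rw [h2]
  have H := ((((hasDerivAt_schwartz (dd (dd b)) x).mul (hasDerivAt_schwartz b x)).add
      ((hasDerivAt_schwartz (dd b) x).mul (hasDerivAt_schwartz (dd b) x))).add
    (((hasDerivAt_schwartz (dd b) x).mul (hasDerivAt_schwartz (dd b) x)).add
      ((hasDerivAt_schwartz b x).mul (hasDerivAt_schwartz (dd (dd b)) x))))
  exact H.deriv.trans (by ring)

/-- converting difference quotients at `t` to slopes -/
lemma transfer {c : ℝ → SchwartzMap ℝ ℝ} {c' : SchwartzMap ℝ ℝ} {T t : ℝ}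
    (h : Tendsto (fun h : ℝ => h⁻¹ • (c (t + h) - c t))
      (𝓝[{h : ℝ | h ≠ 0 ∧ t + h ∈ Icc (0:ℝ) T}] 0) (𝓝 c')) :
    Tendsto (fun y => (y - t)⁻¹ • (c y - c t)) (𝓝[Icc (0:ℝ) T \ {t}] t) (𝓝 c') := by
  have hmap : Tendsto (fun y : ℝ => y - t) (𝓝[Icc (0:ℝ) T \ {t}] t)
      (𝓝[{h : ℝ | h ≠ 0 ∧ t + h ∈ Icc (0:ℝ) T}] 0) := by
    refine tendsto_nhdsWithin_of_tendsto_nhds_of_eventually_within _ ?_ ?_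
    · have h1 : Tendsto (fun y : ℝ => y - t) (𝓝 t) (𝓝 (t - t)) :=
        (continuous_id.sub continuous_const).tendsto t
      simpa using h1.mono_left nhdsWithin_le_nhds
    · filter_upwards [self_mem_nhdsWithin] with y hy
      refine ⟨sub_ne_zero.2 hy.2, ?_⟩
      have hyy : t + (y - t) = y := by ring
      rw [hyy]
      exact hy.1
  have h2 := h.comp hmap
  refine Tendsto.congr (fun y => ?_) h2
  simp only [Function.comp]
  rw [show t + (y - t) = y by ring]

lemma theta_split (γ2 δ2 : ℝ) (b : SchwartzMap ℝ ℝ) :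
    ∫ x, (-(b x ^ 2) - (1 / 2) * b x ^ 3 + (1 / 16) * b x ^ 4
      + (7 / 24) * b x * (deriv (fun y => b y) x) ^ 2
      + γ2 * (deriv (fun y => b y) x) ^ 2
      - δ2 * (iteratedDeriv 2 (fun y => b y) x) ^ 2) =
    (-1 : ℝ) * (∫ x, b x * b x) + ((-1/2 : ℝ) * (∫ x, b x * b x * b x)
      + ((1/16 : ℝ) * (∫ x, b x * b x * b x * b x)
      + ((7/24 : ℝ) * (∫ x, b x * dd b x * dd b x)
      + (γ2 * (∫ x, dd b x * dd b x)
        + (-δ2) * (∫ x, dd (dd b) x * dd (dd b) x))))) := by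
  have h : (fun x => -(b x ^ 2) - (1 / 2) * b x ^ 3 + (1 / 16) * b x ^ 4
      + (7 / 24) * b x * (deriv (fun y => b y) x) ^ 2
      + γ2 * (deriv (fun y => b y) x) ^ 2
      - δ2 * (iteratedDeriv 2 (fun y => b y) x) ^ 2) =
      fun x => (-1 : ℝ) * (b x * b x) + ((-1/2 : ℝ) * (b x * b x * b x)
        + ((1/16 : ℝ) * (b x * b x * b x * b x)
        + ((7/24 : ℝ) * (b x * dd b x * dd b x)
        + (γ2 * (dd b x * dd b x) + (-δ2) * (dd (dd b) x * dd (dd b) x))))) := by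
    funext x
    rw [← d_coe, id2]
    ring
  rw [h]
  have i1 := (integrable_mul2 b b).const_mul (-1 : ℝ)
  have i2 := (integrable_mul3 b b b).const_mul (-1/2 : ℝ)
  have i3 := (integrable_mul4 b b b b).const_mul (1/16 : ℝ)
  have i4 := (integrable_mul3 b (dd b) (dd b)).const_mul (7/24 : ℝ)
  have i5 := (integrable_mul2 (dd b) (dd b)).const_mul γ2
  have i6 := (integrable_mul2 (dd (dd b)) (dd (dd b))).const_mul (-δ2)
  have e5 : ∫ x, (γ2 * (dd b x * dd b x) + (-δ2) * (dd (dd b) x * dd (dd b) x)) =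
      (∫ x, γ2 * (dd b x * dd b x)) + ∫ x, (-δ2) * (dd (dd b) x * dd (dd b) x) :=
    integral_add i5 i6
  have e4 : ∫ x, ((7/24 : ℝ) * (b x * dd b x * dd b x)
        + (γ2 * (dd b x * dd b x) + (-δ2) * (dd (dd b) x * dd (dd b) x))) =
      (∫ x, (7/24 : ℝ) * (b x * dd b x * dd b x)) +
        ∫ x, (γ2 * (dd b x * dd b x) + (-δ2) * (dd (dd b) x * dd (dd b) x)) :=
    integral_add i4 (intAdd i5 i6)
  have e3 : ∫ x, ((1/16 : ℝ) * (b x * b x * b x * b x)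
        + ((7/24 : ℝ) * (b x * dd b x * dd b x)
        + (γ2 * (dd b x * dd b x) + (-δ2) * (dd (dd b) x * dd (dd b) x)))) =
      (∫ x, (1/16 : ℝ) * (b x * b x * b x * b x)) +
        ∫ x, ((7/24 : ℝ) * (b x * dd b x * dd b x)
        + (γ2 * (dd b x * dd b x) + (-δ2) * (dd (dd b) x * dd (dd b) x))) :=
    integral_add i3 (intAdd i4 (intAdd i5 i6))
  have e2 : ∫ x, ((-1/2 : ℝ) * (b x * b x * b x)
        + ((1/16 : ℝ) * (b x * b x * b x * b x)
        + ((7/24 : ℝ) * (b x * dd b x * dd b x)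
        + (γ2 * (dd b x * dd b x) + (-δ2) * (dd (dd b) x * dd (dd b) x))))) =
      (∫ x, (-1/2 : ℝ) * (b x * b x * b x)) +
        ∫ x, ((1/16 : ℝ) * (b x * b x * b x * b x)
        + ((7/24 : ℝ) * (b x * dd b x * dd b x)
        + (γ2 * (dd b x * dd b x) + (-δ2) * (dd (dd b) x * dd (dd b) x)))) :=
    integral_add i2 (intAdd i3 (intAdd i4 (intAdd i5 i6)))
  have e1 : ∫ x, ((-1 : ℝ) * (b x * b x) + ((-1/2 : ℝ) * (b x * b x * b x)
        + ((1/16 : ℝ) * (b x * b x * b x * b x)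
        + ((7/24 : ℝ) * (b x * dd b x * dd b x)
        + (γ2 * (dd b x * dd b x) + (-δ2) * (dd (dd b) x * dd (dd b) x)))))) =
      (∫ x, (-1 : ℝ) * (b x * b x)) +
        ∫ x, ((-1/2 : ℝ) * (b x * b x * b x)
        + ((1/16 : ℝ) * (b x * b x * b x * b x)
        + ((7/24 : ℝ) * (b x * dd b x * dd b x)
        + (γ2 * (dd b x * dd b x) + (-δ2) * (dd (dd b) x * dd (dd b) x))))) :=
    integral_add i1 (intAdd i2 (intAdd i3 (intAdd i4 (intAdd i5 i6))))
  rw [e1, e2, e3, e4, e5, integral_const_mul, integral_const_mul, integral_const_mul,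
    integral_const_mul, integral_const_mul, integral_const_mul]


lemma g_split (γ2 δ2 : ℝ) (a ψ : SchwartzMap ℝ ℝ) :
    ∫ x, (a x + (γ2 * dd (dd a) x + (δ2 * dd (dd (dd (dd a))) x
      + ((3/4 : ℝ) * (a x * a x) + ((7/48 : ℝ) * (dd a x * dd a x)
      + ((7/24 : ℝ) * (a x * dd (dd a) x) + (-1/8 : ℝ) * (a x * (a x * a x)))))))) * ψ x =
    (∫ x, a x * ψ x) + (γ2 * (∫ x, dd (dd a) x * ψ x)
      + (δ2 * (∫ x, dd (dd (dd (dd a))) x * ψ x)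
      + ((3/4 : ℝ) * (∫ x, a x * a x * ψ x)
      + ((7/48 : ℝ) * (∫ x, dd a x * dd a x * ψ x)
      + ((7/24 : ℝ) * (∫ x, a x * dd (dd a) x * ψ x)
      + (-1/8 : ℝ) * (∫ x, a x * a x * a x * ψ x)))))) := by
  have h : (fun x => (a x + (γ2 * dd (dd a) x + (δ2 * dd (dd (dd (dd a))) x
      + ((3/4 : ℝ) * (a x * a x) + ((7/48 : ℝ) * (dd a x * dd a x)
      + ((7/24 : ℝ) * (a x * dd (dd a) x)
        + (-1/8 : ℝ) * (a x * (a x * a x)))))))) * ψ x) =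
      fun x => a x * ψ x + (γ2 * (dd (dd a) x * ψ x)
        + (δ2 * (dd (dd (dd (dd a))) x * ψ x)
        + ((3/4 : ℝ) * (a x * a x * ψ x)
        + ((7/48 : ℝ) * (dd a x * dd a x * ψ x)
        + ((7/24 : ℝ) * (a x * dd (dd a) x * ψ x)
          + (-1/8 : ℝ) * (a x * a x * a x * ψ x)))))) := by
    funext x; ring
  rw [h]
  have i1 := integrable_mul2 a ψ
  have i2 := (integrable_mul2 (dd (dd a)) ψ).const_mul γ2
  have i3 := (integrable_mul2 (dd (dd (dd (dd a)))) ψ).const_mul δ2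
  have i4 := (integrable_mul3 a a ψ).const_mul (3/4 : ℝ)
  have i5 := (integrable_mul3 (dd a) (dd a) ψ).const_mul (7/48 : ℝ)
  have i6 := (integrable_mul3 a (dd (dd a)) ψ).const_mul (7/24 : ℝ)
  have i7 := (integrable_mul4 a a a ψ).const_mul (-1/8 : ℝ)
  have e6 : ∫ x, ((7/24 : ℝ) * (a x * dd (dd a) x * ψ x)
        + (-1/8 : ℝ) * (a x * a x * a x * ψ x)) =
      (∫ x, (7/24 : ℝ) * (a x * dd (dd a) x * ψ x))
        + ∫ x, (-1/8 : ℝ) * (a x * a x * a x * ψ x) := integral_add i6 i7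
  have e5 : ∫ x, ((7/48 : ℝ) * (dd a x * dd a x * ψ x)
        + ((7/24 : ℝ) * (a x * dd (dd a) x * ψ x)
          + (-1/8 : ℝ) * (a x * a x * a x * ψ x))) =
      (∫ x, (7/48 : ℝ) * (dd a x * dd a x * ψ x))
        + ∫ x, ((7/24 : ℝ) * (a x * dd (dd a) x * ψ x)
          + (-1/8 : ℝ) * (a x * a x * a x * ψ x)) :=
    integral_add i5 (intAdd i6 i7)
  have e4 : ∫ x, ((3/4 : ℝ) * (a x * a x * ψ x)
        + ((7/48 : ℝ) * (dd a x * dd a x * ψ x)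
        + ((7/24 : ℝ) * (a x * dd (dd a) x * ψ x)
          + (-1/8 : ℝ) * (a x * a x * a x * ψ x)))) =
      (∫ x, (3/4 : ℝ) * (a x * a x * ψ x))
        + ∫ x, ((7/48 : ℝ) * (dd a x * dd a x * ψ x)
        + ((7/24 : ℝ) * (a x * dd (dd a) x * ψ x)
          + (-1/8 : ℝ) * (a x * a x * a x * ψ x))) :=
    integral_add i4 (intAdd i5 (intAdd i6 i7))
  have e3 : ∫ x, (δ2 * (dd (dd (dd (dd a))) x * ψ x)
        + ((3/4 : ℝ) * (a x * a x * ψ x)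
        + ((7/48 : ℝ) * (dd a x * dd a x * ψ x)
        + ((7/24 : ℝ) * (a x * dd (dd a) x * ψ x)
          + (-1/8 : ℝ) * (a x * a x * a x * ψ x))))) =
      (∫ x, δ2 * (dd (dd (dd (dd a))) x * ψ x))
        + ∫ x, ((3/4 : ℝ) * (a x * a x * ψ x)
        + ((7/48 : ℝ) * (dd a x * dd a x * ψ x)
        + ((7/24 : ℝ) * (a x * dd (dd a) x * ψ x)
          + (-1/8 : ℝ) * (a x * a x * a x * ψ x)))) :=
    integral_add i3 (intAdd i4 (intAdd i5 (intAdd i6 i7)))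
  have e2 : ∫ x, (γ2 * (dd (dd a) x * ψ x) + (δ2 * (dd (dd (dd (dd a))) x * ψ x)
        + ((3/4 : ℝ) * (a x * a x * ψ x)
        + ((7/48 : ℝ) * (dd a x * dd a x * ψ x)
        + ((7/24 : ℝ) * (a x * dd (dd a) x * ψ x)
          + (-1/8 : ℝ) * (a x * a x * a x * ψ x)))))) =
      (∫ x, γ2 * (dd (dd a) x * ψ x))
        + ∫ x, (δ2 * (dd (dd (dd (dd a))) x * ψ x)
        + ((3/4 : ℝ) * (a x * a x * ψ x)
        + ((7/48 : ℝ) * (dd a x * dd a x * ψ x)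
        + ((7/24 : ℝ) * (a x * dd (dd a) x * ψ x)
          + (-1/8 : ℝ) * (a x * a x * a x * ψ x))))) :=
    integral_add i2 (intAdd i3 (intAdd i4 (intAdd i5 (intAdd i6 i7))))
  have e1 : ∫ x, (a x * ψ x + (γ2 * (dd (dd a) x * ψ x)
        + (δ2 * (dd (dd (dd (dd a))) x * ψ x)
        + ((3/4 : ℝ) * (a x * a x * ψ x)
        + ((7/48 : ℝ) * (dd a x * dd a x * ψ x)
        + ((7/24 : ℝ) * (a x * dd (dd a) x * ψ x)
          + (-1/8 : ℝ) * (a x * a x * a x * ψ x))))))) =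
      (∫ x, a x * ψ x) + ∫ x, (γ2 * (dd (dd a) x * ψ x)
        + (δ2 * (dd (dd (dd (dd a))) x * ψ x)
        + ((3/4 : ℝ) * (a x * a x * ψ x)
        + ((7/48 : ℝ) * (dd a x * dd a x * ψ x)
        + ((7/24 : ℝ) * (a x * dd (dd a) x * ψ x)
          + (-1/8 : ℝ) * (a x * a x * a x * ψ x)))))) :=
    integral_add i1 (intAdd i2 (intAdd i3 (intAdd i4 (intAdd i5 (intAdd i6 i7)))))
  rw [e1, e2, e3, e4, e5, e6, integral_const_mul, integral_const_mul, integral_const_mul,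
    integral_const_mul, integral_const_mul, integral_const_mul]

end KdVAux

open KdVAux

local notation "dd" => SchwartzMap.derivCLM ℝ ℝ

theorem second_invariant_conservation (γ1 δ1 γ2 δ2 T : ℝ) (hγ1 : 0 < γ1)
    (hδ1 : 0 < δ1) (hT : 0 < T)
    (η : ℝ → SchwartzMap ℝ ℝ) (D : ℕ → ℝ → SchwartzMap ℝ ℝ) (hD0 : D 0 = η)
    (hDdiff : ∀ n : ℕ, ∀ t ∈ Icc (0 : ℝ) T,
      Tendsto (fun h : ℝ => h⁻¹ • (D n (t + h) - D n t))
        (nhdsWithin 0 {h : ℝ | h ≠ 0 ∧ t + h ∈ Icc (0 : ℝ) T}) (nhds (D (n + 1) t)))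
    -- `η` solves the fifth-order KdV–BBM equation with `γ = 7/48` on `ℝ × [0,T]`:
    (heq : ∀ t ∈ Icc (0 : ℝ) T, ∀ x : ℝ,
      D 1 t x + deriv (fun y => η t y) x
        - γ1 * iteratedDeriv 2 (fun y => D 1 t y) x
        + γ2 * iteratedDeriv 3 (fun y => η t y) x
        + δ1 * iteratedDeriv 4 (fun y => D 1 t y) x
        + δ2 * iteratedDeriv 5 (fun y => η t y) x
        + (3 / 4) * deriv (fun y => η t y ^ 2) x
        + (7 / 48) * iteratedDeriv 3 (fun y => η t y ^ 2) x
        - (7 / 48) * deriv (fun y => (deriv (fun z => η t z) y) ^ 2) x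
        - (1 / 8) * deriv (fun y => η t y ^ 3) x = 0) :
    -- conclusion: conservation of the Hamiltonian Θ
    ∀ t ∈ Icc (0 : ℝ) T,
      (1 / 2) * (∫ x : ℝ,
          (-(η t x ^ 2) - (1 / 2) * η t x ^ 3 + (1 / 16) * η t x ^ 4
            + (7 / 24) * η t x * (deriv (fun y => η t y) x) ^ 2
            + γ2 * (deriv (fun y => η t y) x) ^ 2
            - δ2 * (iteratedDeriv 2 (fun y => η t y) x) ^ 2)) =
        (1 / 2) * ∫ x : ℝ,
          (-(η 0 x ^ 2) - (1 / 2) * η 0 x ^ 3 + (1 / 16) * η 0 x ^ 4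
            + (7 / 24) * η 0 x * (deriv (fun y => η 0 y) x) ^ 2
            + γ2 * (deriv (fun y => η 0 y) x) ^ 2
            - δ2 * (iteratedDeriv 2 (fun y => η 0 y) x) ^ 2) := by
  have key : ∀ t ∈ Icc (0 : ℝ) T, HasDerivWithinAt
      (fun τ => (1 / 2) * ∫ x : ℝ,
        (-(η τ x ^ 2) - (1 / 2) * η τ x ^ 3 + (1 / 16) * η τ x ^ 4
          + (7 / 24) * η τ x * (deriv (fun y => η τ y) x) ^ 2
          + γ2 * (deriv (fun y => η τ y) x) ^ 2
          - δ2 * (iteratedDeriv 2 (fun y => η τ y) x) ^ 2))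
      0 (Icc (0 : ℝ) T) t := by
    intro t ht
    -- slope hypotheses
    have hη : Tendsto (fun y => (y - t)⁻¹ • (η y - η t)) (𝓝[Icc (0:ℝ) T \ {t}] t)
        (𝓝 (D 1 t)) := by
      have h := transfer (hDdiff 0 t ht)
      rw [hD0] at h
      simpa using h
    have h1 := slope_comp_clm (SchwartzMap.derivCLM ℝ ℝ) hη
    have h2 := slope_comp_clm (SchwartzMap.derivCLM ℝ ℝ) h1
    have hP1 := hasDeriv_int2 hη hη
    have hP2 := hasDeriv_int3 hη hη hη
    have hP3 := hasDeriv_int4 hη hη hη hη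
    have hP4 := hasDeriv_int3 hη h1 h1
    have hP5 := hasDeriv_int2 h1 h1
    have hP6 := hasDeriv_int2 h2 h2
    have hcomb := ((hP1.const_mul (-1 : ℝ)).add ((hP2.const_mul (-1/2 : ℝ)).add
      ((hP3.const_mul (1/16 : ℝ)).add ((hP4.const_mul (7/24 : ℝ)).add
      ((hP5.const_mul γ2).add (hP6.const_mul (-δ2))))))).const_mul (1/2 : ℝ)
    -- the equation satisfied at time t, in Schwartz-operator form
    have hg : ∀ x : ℝ, HasDerivAt (fun x : ℝ => η t x + (γ2 * dd (dd (η t)) x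
        + (δ2 * dd (dd (dd (dd (η t)))) x
        + ((3/4 : ℝ) * (η t x * η t x) + ((7/48 : ℝ) * (dd (η t) x * dd (η t) x)
        + ((7/24 : ℝ) * (η t x * dd (dd (η t)) x)
          + (-1/8 : ℝ) * (η t x * (η t x * η t x))))))))
        (-(D 1 t x) + γ1 * dd (dd (D 1 t)) x - δ1 * dd (dd (dd (dd (D 1 t)))) x) x := by
      intro x
      have hx := heq t ht x
      have hpow2 : (fun y => η t y ^ 2) = fun y => η t y * η t y := by funext y; ring
      have hpow3 : (fun y => η t y ^ 3) = fun y => η t y * (η t y * η t y) := by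
        funext y; ring
      rw [hpow2, hpow3] at hx
      simp only [← d_coe] at hx
      have hpow2' : (fun y => dd (η t) y ^ 2) = fun y => dd (η t) y * dd (η t) y := by
        funext y; ring
      rw [hpow2'] at hx
      rw [id2 (D 1 t), id3 (η t), id4 (D 1 t), id5 (η t), d3_mul2 (η t) x,
        deriv_mul2 (η t) x, deriv_mul2 (dd (η t)) x, deriv_mul3 (η t) x] at hx
      have H := (hasDerivAt_schwartz (η t) x).add
        (((hasDerivAt_schwartz (dd (dd (η t))) x).const_mul γ2).add
        (((hasDerivAt_schwartz (dd (dd (dd (dd (η t))))) x).const_mul δ2).add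
        ((((hasDerivAt_schwartz (η t) x).mul (hasDerivAt_schwartz (η t) x)).const_mul
            (3/4 : ℝ)).add
        ((((hasDerivAt_schwartz (dd (η t)) x).mul
            (hasDerivAt_schwartz (dd (η t)) x)).const_mul (7/48 : ℝ)).add
        ((((hasDerivAt_schwartz (η t) x).mul
            (hasDerivAt_schwartz (dd (dd (η t))) x)).const_mul (7/24 : ℝ)).add
        (((hasDerivAt_schwartz (η t) x).mul ((hasDerivAt_schwartz (η t) x).mul
            (hasDerivAt_schwartz (η t) x))).const_mul (-1/8 : ℝ)))))))
      exact H.congr_deriv (by simp only [Pi.mul_apply]; linear_combination hx)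
    have hgtop : Tendsto (fun x : ℝ => η t x + (γ2 * dd (dd (η t)) x
        + (δ2 * dd (dd (dd (dd (η t)))) x
        + ((3/4 : ℝ) * (η t x * η t x) + ((7/48 : ℝ) * (dd (η t) x * dd (η t) x)
        + ((7/24 : ℝ) * (η t x * dd (dd (η t)) x)
          + (-1/8 : ℝ) * (η t x * (η t x * η t x)))))))) atTop (𝓝 0) := by
      have h := (schwartz_zero_atTop (η t)).add
        (((schwartz_zero_atTop (dd (dd (η t)))).const_mul γ2).add
        (((schwartz_zero_atTop (dd (dd (dd (dd (η t)))))).const_mul δ2).add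
        ((((schwartz_zero_atTop (η t)).mul (schwartz_zero_atTop (η t))).const_mul
            (3/4 : ℝ)).add
        ((((schwartz_zero_atTop (dd (η t))).mul
            (schwartz_zero_atTop (dd (η t)))).const_mul (7/48 : ℝ)).add
        ((((schwartz_zero_atTop (η t)).mul
            (schwartz_zero_atTop (dd (dd (η t))))).const_mul (7/24 : ℝ)).add
        (((schwartz_zero_atTop (η t)).mul ((schwartz_zero_atTop (η t)).mul
            (schwartz_zero_atTop (η t)))).const_mul (-1/8 : ℝ)))))))
      simpa using h
    have hgbot : Tendsto (fun x : ℝ => η t x + (γ2 * dd (dd (η t)) x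
        + (δ2 * dd (dd (dd (dd (η t)))) x
        + ((3/4 : ℝ) * (η t x * η t x) + ((7/48 : ℝ) * (dd (η t) x * dd (η t) x)
        + ((7/24 : ℝ) * (η t x * dd (dd (η t)) x)
          + (-1/8 : ℝ) * (η t x * (η t x * η t x)))))))) atBot (𝓝 0) := by
      have h := (schwartz_zero_atBot (η t)).add
        (((schwartz_zero_atBot (dd (dd (η t)))).const_mul γ2).add
        (((schwartz_zero_atBot (dd (dd (dd (dd (η t)))))).const_mul δ2).add
        ((((schwartz_zero_atBot (η t)).mul (schwartz_zero_atBot (η t))).const_mul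
            (3/4 : ℝ)).add
        ((((schwartz_zero_atBot (dd (η t))).mul
            (schwartz_zero_atBot (dd (η t)))).const_mul (7/48 : ℝ)).add
        ((((schwartz_zero_atBot (η t)).mul
            (schwartz_zero_atBot (dd (dd (η t))))).const_mul (7/24 : ℝ)).add
        (((schwartz_zero_atBot (η t)).mul ((schwartz_zero_atBot (η t)).mul
            (schwartz_zero_atBot (η t)))).const_mul (-1/8 : ℝ)))))))
      simpa using h
    have hgψ : Integrable (fun x : ℝ => (η t x + (γ2 * dd (dd (η t)) x
        + (δ2 * dd (dd (dd (dd (η t)))) x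
        + ((3/4 : ℝ) * (η t x * η t x) + ((7/48 : ℝ) * (dd (η t) x * dd (η t) x)
        + ((7/24 : ℝ) * (η t x * dd (dd (η t)) x)
          + (-1/8 : ℝ) * (η t x * (η t x * η t x)))))))) * D 1 t x) := by
      have hsum : (fun x : ℝ => (η t x + (γ2 * dd (dd (η t)) x
          + (δ2 * dd (dd (dd (dd (η t)))) x
          + ((3/4 : ℝ) * (η t x * η t x) + ((7/48 : ℝ) * (dd (η t) x * dd (η t) x)
          + ((7/24 : ℝ) * (η t x * dd (dd (η t)) x)
            + (-1/8 : ℝ) * (η t x * (η t x * η t x)))))))) * D 1 t x) =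
          fun x => η t x * D 1 t x + (γ2 * (dd (dd (η t)) x * D 1 t x)
            + (δ2 * (dd (dd (dd (dd (η t)))) x * D 1 t x)
            + ((3/4 : ℝ) * (η t x * η t x * D 1 t x)
            + ((7/48 : ℝ) * (dd (η t) x * dd (η t) x * D 1 t x)
            + ((7/24 : ℝ) * (η t x * dd (dd (η t)) x * D 1 t x)
              + (-1/8 : ℝ) * (η t x * η t x * η t x * D 1 t x)))))) := by
        funext x; ring
      rw [hsum]
      exact intAdd (integrable_mul2 _ _) (intAdd ((integrable_mul2 _ _).const_mul _)
        (intAdd ((integrable_mul2 _ _).const_mul _)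
        (intAdd ((integrable_mul3 _ _ _).const_mul _)
        (intAdd ((integrable_mul3 _ _ _).const_mul _)
        (intAdd ((integrable_mul3 _ _ _).const_mul _)
          ((integrable_mul4 _ _ _ _).const_mul _))))))
    have hskew := skew_vanish (D 1 t) γ1 δ1 _ hg hgbot hgtop hgψ
    have hskew0 : ∫ x, (η t x + (γ2 * dd (dd (η t)) x
        + (δ2 * dd (dd (dd (dd (η t)))) x
        + ((3/4 : ℝ) * (η t x * η t x) + ((7/48 : ℝ) * (dd (η t) x * dd (η t) x)
        + ((7/24 : ℝ) * (η t x * dd (dd (η t)) x)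
          + (-1/8 : ℝ) * (η t x * (η t x * η t x)))))))) * D 1 t x = 0 := hskew
    rw [g_split γ2 δ2 (η t) (D 1 t)] at hskew0
    -- integration by parts identities
    have hib1 : ∫ x, dd (dd (η t)) x * D 1 t x = -∫ x, dd (η t) x * dd (D 1 t) x :=
      ibp_schwartz (dd (η t)) (D 1 t)
    have hib2 : ∫ x, dd (dd (dd (dd (η t)))) x * D 1 t x =
        -∫ x, dd (dd (dd (η t))) x * dd (D 1 t) x :=
      ibp_schwartz (dd (dd (dd (η t)))) (D 1 t)
    have hib3 : ∫ x, dd (dd (dd (η t))) x * dd (D 1 t) x =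
        -∫ x, dd (dd (η t)) x * dd (dd (D 1 t)) x :=
      ibp_schwartz (dd (dd (η t))) (dd (D 1 t))
    have htrip := integral_triple_deriv (η t) (dd (η t)) (D 1 t)
    -- commutation of integrands
    have c1 : ∫ x, D 1 t x * η t x = ∫ x, η t x * D 1 t x := by
      congr 1; funext x; ring
    have c2 : ∫ x, D 1 t x * η t x * η t x = ∫ x, η t x * η t x * D 1 t x := by
      congr 1; funext x; ring
    have c3 : ∫ x, D 1 t x * η t x * η t x * η t x =
        ∫ x, η t x * η t x * η t x * D 1 t x := by
      congr 1; funext x; ring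
    have c4 : ∫ x, D 1 t x * dd (η t) x * dd (η t) x =
        ∫ x, dd (η t) x * dd (η t) x * D 1 t x := by
      congr 1; funext x; ring
    have c5 : ∫ x, dd (D 1 t) x * η t x * dd (η t) x =
        ∫ x, η t x * dd (η t) x * dd (D 1 t) x := by
      congr 1; funext x; ring
    have c6 : ∫ x, dd (D 1 t) x * dd (η t) x = ∫ x, dd (η t) x * dd (D 1 t) x := by
      congr 1; funext x; ring
    have c7 : ∫ x, dd (dd (D 1 t)) x * dd (dd (η t)) x =
        ∫ x, dd (dd (η t)) x * dd (dd (D 1 t)) x := by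
      congr 1; funext x; ring
    have hval : (1/2 : ℝ) * ((-1 : ℝ) * ((∫ x, D 1 t x * η t x) + ∫ x, D 1 t x * η t x)
        + ((-1/2 : ℝ) * ((∫ x, D 1 t x * η t x * η t x) + ((∫ x, D 1 t x * η t x * η t x)
          + ∫ x, D 1 t x * η t x * η t x))
        + ((1/16 : ℝ) * ((∫ x, D 1 t x * η t x * η t x * η t x)
          + ((∫ x, D 1 t x * η t x * η t x * η t x)
          + ((∫ x, D 1 t x * η t x * η t x * η t x)
          + ∫ x, D 1 t x * η t x * η t x * η t x)))
        + ((7/24 : ℝ) * ((∫ x, D 1 t x * dd (η t) x * dd (η t) x)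
          + ((∫ x, dd (D 1 t) x * η t x * dd (η t) x)
          + ∫ x, dd (D 1 t) x * η t x * dd (η t) x))
        + (γ2 * ((∫ x, dd (D 1 t) x * dd (η t) x) + ∫ x, dd (D 1 t) x * dd (η t) x)
        + (-δ2) * ((∫ x, dd (dd (D 1 t)) x * dd (dd (η t)) x)
          + ∫ x, dd (dd (D 1 t)) x * dd (dd (η t)) x)))))) = 0 := by
      rw [c1, c2, c3, c4, c5, c6, c7]
      linear_combination (-1 : ℝ) * hskew0 + γ2 * hib1 + δ2 * hib2 - δ2 * hib3
        + (7/24 : ℝ) * htrip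
    rw [hval] at hcomb
    have hEq : ∀ τ : ℝ, (1 / 2) * (∫ x : ℝ,
        (-(η τ x ^ 2) - (1 / 2) * η τ x ^ 3 + (1 / 16) * η τ x ^ 4
          + (7 / 24) * η τ x * (deriv (fun y => η τ y) x) ^ 2
          + γ2 * (deriv (fun y => η τ y) x) ^ 2
          - δ2 * (iteratedDeriv 2 (fun y => η τ y) x) ^ 2)) =
        (1/2 : ℝ) * ((-1 : ℝ) * (∫ x, η τ x * η τ x)
          + ((-1/2 : ℝ) * (∫ x, η τ x * η τ x * η τ x)
          + ((1/16 : ℝ) * (∫ x, η τ x * η τ x * η τ x * η τ x)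
          + ((7/24 : ℝ) * (∫ x, η τ x * dd (η τ) x * dd (η τ) x)
          + (γ2 * (∫ x, dd (η τ) x * dd (η τ) x)
            + (-δ2) * (∫ x, dd (dd (η τ)) x * dd (dd (η τ)) x)))))) := by
      intro τ
      rw [theta_split γ2 δ2 (η τ)]
    exact hcomb.congr (fun τ _ => hEq τ) (hEq t)
  intro t ht
  have hdiff : DifferentiableOn ℝ (fun τ => (1 / 2) * ∫ x : ℝ,
      (-(η τ x ^ 2) - (1 / 2) * η τ x ^ 3 + (1 / 16) * η τ x ^ 4
        + (7 / 24) * η τ x * (deriv (fun y => η τ y) x) ^ 2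
        + γ2 * (deriv (fun y => η τ y) x) ^ 2
        - δ2 * (iteratedDeriv 2 (fun y => η τ y) x) ^ 2)) (Icc (0:ℝ) T) :=
    fun τ hτ => (key τ hτ).differentiableWithinAt
  have hzero : ∀ τ ∈ Ico (0:ℝ) T, derivWithin (fun τ => (1 / 2) * ∫ x : ℝ,
      (-(η τ x ^ 2) - (1 / 2) * η τ x ^ 3 + (1 / 16) * η τ x ^ 4
        + (7 / 24) * η τ x * (deriv (fun y => η τ y) x) ^ 2
        + γ2 * (deriv (fun y => η τ y) x) ^ 2
        - δ2 * (iteratedDeriv 2 (fun y => η τ y) x) ^ 2)) (Icc (0:ℝ) T) τ = 0 :=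
    fun τ hτ => (key τ (Ico_subset_Icc_self hτ)).derivWithin
      ((uniqueDiffOn_Icc hT) τ (Ico_subset_Icc_self hτ))
  exact constant_of_derivWithin_zero hdiff hzero t ht
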